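/- Let $\{F(\cdot,\theta), \theta \in \Theta\}$ be a $k$-strongly identifiable family of distribution functions on a compact $\Theta \subset \mathbb{R}$, with $F^{(p)}(x,\theta)$ (derivatives in $\theta$) jointly lower semi-continuous appropriately. Then for every $\eps > 0$ there exists $c(\eps) > 0$ such that for all $\eps$-separated tuples $(\theta_1,\dots,\theta_m) \in \Theta^m$ and all coefficient arrays $(\alpha_{p,j})_{0 \le p \le k, 1 \le j \le m}$: $\| \sum_{p=0}^k \sum_{j=1}^m \alpha_{p,j} F^{(p)}(\cdot, \theta_j) \|_\infty \ge c(\eps) \|\alpha\|$. -/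

import Mathlib

/-- for a `k`-strongly identifiable family with `θ`-continuous derivatives,
for each `ε > 0` there is `c(ε) > 0` such that any uniform bound `y` on
`|∑_p ∑_j α_{p,j} F^{(p)}(x, θ_j)|` over `x` dominates `c(ε)·‖α‖`,
uniformly over ε-separated tuples `θ` in `Θ`; i.e. the sup norm is `≥ c(ε)‖α‖`. -/
theorem stmt_5 (Θ : Set ℝ) (hΘ : IsCompact Θ) (k m : ℕ) (F : ℝ → ℝ → ℝ)
    (hcont : ∀ p ≤ k, ∀ x : ℝ, Continuous fun θ => iteratedDeriv p (F x) θ)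
    (hident : ∀ (M : ℕ) (θ : Fin M → ℝ), (∀ i, θ i ∈ Θ) → Function.Injective θ →
      ∀ α : Fin (k + 1) → Fin M → ℝ,
        (∀ x : ℝ, ∑ p, ∑ i, α p i * iteratedDeriv (p : ℕ) (F x) (θ i) = 0) → α = 0)
    (ε : ℝ) (hε : 0 < ε) :
    ∃ c > 0, ∀ θ : Fin m → ℝ, (∀ i, θ i ∈ Θ) → (∀ i i', i ≠ i' → ε ≤ |θ i - θ i'|) →
      ∀ (α : Fin (k + 1) → Fin m → ℝ) (y : ℝ),
        (∀ x : ℝ, |∑ p, ∑ i, α p i * iteratedDeriv (p : ℕ) (F x) (θ i)| ≤ y) →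
        c * ‖α‖ ≤ y := by
  classical
  set A : Set (Fin m → ℝ) :=
    {θ | (∀ i, θ i ∈ Θ) ∧ ∀ i i', i ≠ i' → ε ≤ |θ i - θ i'|} with hA
  set K : Set ((Fin m → ℝ) × (Fin (k + 1) → Fin m → ℝ)) :=
    A ×ˢ (Metric.sphere 0 1) with hKdef
  -- the function g x
  set g : ℝ → (Fin m → ℝ) × (Fin (k + 1) → Fin m → ℝ) → ℝ :=
    fun x s => ∑ p, ∑ i, s.2 p i * iteratedDeriv (p : ℕ) (F x) (s.1 i) with hg
  have hgcont : ∀ x, Continuous (g x) := by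
    intro x
    apply continuous_finset_sum
    intro p _
    apply continuous_finset_sum
    intro i _
    have h1 : Continuous fun s : (Fin m → ℝ) × (Fin (k + 1) → Fin m → ℝ) =>
        iteratedDeriv (p : ℕ) (F x) (s.1 i) :=
      (hcont p p.is_le x).comp ((continuous_apply i).comp continuous_fst)
    have h0 : Continuous fun s : (Fin m → ℝ) × (Fin (k + 1) → Fin m → ℝ) => s.2 p i :=
      (continuous_apply i).comp ((continuous_apply p).comp continuous_snd)
    exact h0.mul h1
  -- K is compact
  have hAcomp : IsCompact A := by
    have h1 : A = (Set.univ.pi fun _ : Fin m => Θ) ∩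
        (⋂ i, ⋂ i', {θ : Fin m → ℝ | i ≠ i' → ε ≤ |θ i - θ i'|}) := by
      ext θ
      simp [hA, Set.mem_pi, Set.mem_iInter]
    rw [h1]
    apply (isCompact_univ_pi fun _ => hΘ).inter_right
    apply isClosed_iInter
    intro i
    apply isClosed_iInter
    intro i'
    by_cases h : i = i'
    · simp [h]
    · have : {θ : Fin m → ℝ | i ≠ i' → ε ≤ |θ i - θ i'|}
          = {θ : Fin m → ℝ | ε ≤ |θ i - θ i'|} := by
        ext θ; simp [h]
      rw [this]
      exact isClosed_le continuous_const
        (((continuous_apply i).sub (continuous_apply i')).abs)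
  have hKcomp : IsCompact K := hAcomp.prod (isCompact_sphere 0 1)
  -- points of K have nonvanishing g at some x
  have hpos : ∀ s ∈ K, ∃ x : ℝ, 0 < |g x s| := by
    rintro ⟨θ, α⟩ hs
    obtain ⟨hθA, hαs⟩ := hs
    have hα1 : ‖α‖ = 1 := by simpa using hαs
    have hinj : Function.Injective θ := by
      intro i i' h
      by_contra hne
      have h2 := hθA.2 i i' hne
      simp only at h2
      rw [h] at h2
      simp at h2
      linarith
    by_contra hz
    push_neg at hz
    have : α = 0 := by
      apply hident m θ hθA.1 hinj
      intro x
      have := hz x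
      have h2 := abs_nonneg (g x (θ, α))
      have : |g x (θ, α)| = 0 := le_antisymm this h2
      simpa [hg] using abs_eq_zero.mp this
    rw [this] at hα1
    simp at hα1
  by_cases hK : K.Nonempty
  · -- open cover
    have hcover : K ⊆ ⋃ x : ℝ, (fun x => {s | 0 < |g x s|}) x := by
      intro s hs
      obtain ⟨x, hx⟩ := hpos s hs
      exact Set.mem_iUnion.mpr ⟨x, hx⟩
    obtain ⟨t, ht⟩ := hKcomp.elim_finite_subcover _
      (fun x => isOpen_lt continuous_const (hgcont x).abs) hcover
    have htne : t.Nonempty := by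
      obtain ⟨s, hs⟩ := hK
      obtain ⟨x, hx, _⟩ := Set.mem_iUnion₂.mp (ht hs)
      exact ⟨x, hx⟩
    set f : (Fin m → ℝ) × (Fin (k + 1) → Fin m → ℝ) → ℝ :=
      fun s => ∑ x ∈ t, |g x s| with hf
    have hfcont : Continuous f := by
      apply continuous_finset_sum
      intro x _
      exact (hgcont x).abs
    obtain ⟨s0, hs0K, hs0min⟩ := hKcomp.exists_isMinOn hK hfcont.continuousOn
    have hfpos : ∀ s ∈ K, 0 < f s := by
      intro s hs
      obtain ⟨x, hxt, hx⟩ := Set.mem_iUnion₂.mp (ht hs)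
      exact Finset.sum_pos' (fun x _ => abs_nonneg _) ⟨x, hxt, hx⟩
    have hc0 : 0 < f s0 := hfpos s0 hs0K
    have hcard : (0 : ℝ) < t.card := by
      exact_mod_cast Finset.card_pos.mpr htne
    refine ⟨f s0 / t.card, div_pos hc0 hcard, ?_⟩
    intro θ hθ hsep α y hy
    have hy0 : 0 ≤ y := le_trans (abs_nonneg _) (hy 0)
    by_cases hα : α = 0
    · simp [hα, hy0]
    · have hαn : 0 < ‖α‖ := norm_pos_iff.mpr hα
      set α' : Fin (k + 1) → Fin m → ℝ := ‖α‖⁻¹ • α with hα'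
      have hα'1 : ‖α'‖ = 1 := norm_smul_inv_norm hα
      have hsK : (θ, α') ∈ K := by
        constructor
        · exact ⟨hθ, hsep⟩
        · simpa [Metric.mem_sphere] using hα'1
      -- bound each |g x (θ, α')|
      have hb : ∀ x : ℝ, |g x (θ, α')| ≤ ‖α‖⁻¹ * y := by
        intro x
        have : g x (θ, α') = ‖α‖⁻¹ * g x (θ, α) := by
          simp only [hg, hα', Finset.mul_sum]
          congr 1; ext p; congr 1; ext i
          simp [Pi.smul_apply, smul_eq_mul]; ring
        rw [this, abs_mul, abs_of_nonneg (by positivity : (0:ℝ) ≤ ‖α‖⁻¹)]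
        exact mul_le_mul_of_nonneg_left (hy x) (by positivity)
      have hfb : f (θ, α') ≤ t.card * (‖α‖⁻¹ * y) := by
        calc f (θ, α') = ∑ x ∈ t, |g x (θ, α')| := rfl
          _ ≤ ∑ _x ∈ t, ‖α‖⁻¹ * y := Finset.sum_le_sum fun x _ => hb x
          _ = t.card * (‖α‖⁻¹ * y) := by simp [Finset.sum_const, nsmul_eq_mul]
      have hmin : f s0 ≤ f (θ, α') := hs0min hsK
      have : f s0 ≤ t.card * (‖α‖⁻¹ * y) := le_trans hmin hfb
      rw [div_mul_eq_mul_div, div_le_iff₀ hcard]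
      calc f s0 * ‖α‖ ≤ (t.card * (‖α‖⁻¹ * y)) * ‖α‖ :=
            mul_le_mul_of_nonneg_right this (le_of_lt hαn)
        _ = y * t.card := by field_simp
  · -- K empty: only α = 0 possible for admissible θ
    refine ⟨1, one_pos, ?_⟩
    intro θ hθ hsep α y hy
    have hy0 : 0 ≤ y := le_trans (abs_nonneg _) (hy 0)
    by_cases hα : α = 0
    · simp [hα, hy0]
    · exfalso
      apply hK
      refine ⟨(θ, ‖α‖⁻¹ • α), ⟨hθ, hsep⟩, ?_⟩
      simpa [Metric.mem_sphere] using (show ‖‖α‖⁻¹ • α‖ = 1 by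
        rw [norm_smul, norm_inv, norm_norm, inv_mul_cancel₀ (norm_ne_zero_iff.mpr hα)])
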